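/- Let Q be a d×d real Markov generator. Then the limit M∞ = lim_{t→∞} exp(t·Q) exists, M∞ is a Markov matrix, and M∞² = M∞ (so M∞ is an idempotent Markov matrix). -/

import Mathlib

/-- A Markov matrix: nonnegative entries, each row sums to 1. -/
def IsMarkov {d : ℕ} (M : Matrix (Fin d) (Fin d) ℝ) : Prop :=
  (∀ i j, 0 ≤ M i j) ∧ ∀ i, ∑ j, M i j = 1

/-- A Markov generator (rate matrix): nonnegative off-diagonal entries,
each row sums to 0. -/
def IsGenerator {d : ℕ} (Q : Matrix (Fin d) (Fin d) ℝ) : Prop :=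
  (∀ i j, i ≠ j → 0 ≤ Q i j) ∧ ∀ i, ∑ j, Q i j = 0

open NormedSpace Filter Topology
open scoped Matrix

namespace MarkovLimitAux

noncomputable section
variable {d : ℕ}
attribute [local instance] Matrix.linftyOpNormedRing Matrix.linftyOpNormedAlgebra

variable {𝕜 : Type*} [RCLike 𝕜]


variable {𝕜 : Type*} [RCLike 𝕜]

/-- mulVec by a fixed vector, as a linear map in the matrix. -/
def mvL (v : Fin d → 𝕜) : Matrix (Fin d) (Fin d) 𝕜 →ₗ[ℝ] (Fin d → 𝕜) where
  toFun M := M *ᵥ v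
  map_add' M N := Matrix.add_mulVec M N v
  map_smul' r M := by
    ext i
    simp [Matrix.mulVec, dotProduct, Finset.mul_sum, Finset.smul_sum, smul_mul_assoc]

lemma exp_mulVec (A : Matrix (Fin d) (Fin d) 𝕜) (v : Fin d → 𝕜) :
    exp A *ᵥ v = ∑' n : ℕ, ((n.factorial : ℝ)⁻¹) • (A ^ n *ᵥ v) := by
  have hs : Summable fun n : ℕ => ((n.factorial : ℝ)⁻¹) • A ^ n :=
    expSeries_summable' (𝕂 := ℝ) A
  have hc : Continuous (mvL (d := d) v) := (mvL v).continuous_of_finiteDimensional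
  have := (ContinuousLinearMap.map_tsum ⟨mvL v, hc⟩ hs)
  rw [exp_eq_tsum ℝ]
  simpa [mvL] using this

lemma summable_mulVec (A : Matrix (Fin d) (Fin d) 𝕜) (v : Fin d → 𝕜) :
    Summable fun n : ℕ => ((n.factorial : ℝ)⁻¹) • (A ^ n *ᵥ v) := by
  have hs : Summable fun n : ℕ => ((n.factorial : ℝ)⁻¹) • A ^ n :=
    expSeries_summable' (𝕂 := ℝ) A
  have hc : Continuous (mvL (d := d) v) := (mvL v).continuous_of_finiteDimensional
  have h2 := hs.map (⟨mvL v, hc⟩ : Matrix (Fin d) (Fin d) 𝕜 →L[ℝ] (Fin d → 𝕜)) hc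
  refine (summable_congr fun n => ?_).mp h2
  show mvL v _ = _
  simp [mvL, Matrix.mulVec, dotProduct, Finset.mul_sum, Finset.smul_sum, smul_mul_assoc]

lemma exp_entry (A : Matrix (Fin d) (Fin d) 𝕜) (i j : Fin d) :
    exp A i j = ∑' n : ℕ, ((n.factorial : ℝ)⁻¹) • ((A ^ n) i j) := by
  have h := congrFun (exp_mulVec A (Pi.single j 1)) i
  have hs := summable_mulVec A (Pi.single j 1)
  rw [tsum_apply hs] at h
  simpa [Matrix.mulVec_single] using h

lemma summable_entry (A : Matrix (Fin d) (Fin d) 𝕜) (i j : Fin d) :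
    Summable fun n : ℕ => ((n.factorial : ℝ)⁻¹) • ((A ^ n) i j) := by
  have hs := summable_mulVec A (Pi.single j 1)
  have := hs.map (ContinuousLinearMap.proj (R := ℝ) (φ := fun _ : Fin d => 𝕜) i)
    (ContinuousLinearMap.proj i).continuous
  simpa [Matrix.mulVec_single, Function.comp_def, Matrix.col_apply] using this

/-- Entrywise nonneg matrices have entrywise nonneg powers. -/
lemma pow_nonneg_entries {A : Matrix (Fin d) (Fin d) ℝ} (h : ∀ i j, 0 ≤ A i j) (n : ℕ) :
    ∀ i j, 0 ≤ (A ^ n) i j := by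
  induction n with
  | zero => intro i j; by_cases hij : i = j <;> simp [Matrix.one_apply, hij]
  | succ n ih =>
    intro i j
    rw [pow_succ, Matrix.mul_apply]
    exact Finset.sum_nonneg fun k _ => mul_nonneg (ih i k) (h k j)

lemma exp_nonneg_entries {A : Matrix (Fin d) (Fin d) ℝ} (h : ∀ i j, 0 ≤ A i j) (i j : Fin d) :
    0 ≤ exp A i j := by
  rw [exp_entry]
  exact tsum_nonneg fun n => smul_nonneg (by positivity) (pow_nonneg_entries h n i j)

lemma exp_diag_ge_one {A : Matrix (Fin d) (Fin d) ℝ} (h : ∀ i j, 0 ≤ A i j) (i : Fin d) :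
    1 ≤ exp A i i := by
  rw [exp_entry]
  have h0 : ((0:ℕ).factorial : ℝ)⁻¹ • ((A ^ 0) i i) = 1 := by simp [Matrix.one_apply]
  calc (1:ℝ) = ((0:ℕ).factorial : ℝ)⁻¹ • ((A ^ 0) i i) := h0.symm
    _ ≤ ∑' n : ℕ, ((n.factorial : ℝ)⁻¹) • ((A ^ n) i i) :=
      Summable.le_tsum (summable_entry A i i) 0
        (fun n _ => smul_nonneg (by positivity) (pow_nonneg_entries h n i i))

lemma exp_real_smul_one (r : ℝ) :
    exp (r • (1 : Matrix (Fin d) (Fin d) ℝ)) = Real.exp r • (1 : Matrix (Fin d) (Fin d) ℝ) := by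
  have h1 : r • (1 : Matrix (Fin d) (Fin d) ℝ) = algebraMap ℝ _ r :=
    (Algebra.algebraMap_eq_smul_one r).symm
  rw [h1]
  have h2 := map_exp (algebraMap ℝ (Matrix (Fin d) (Fin d) ℝ)) (continuous_algebraMap _ _) r
  rw [← Real.exp_eq_exp_ℝ] at h2
  convert h2.symm using 1
  · rfl
  · rw [Algebra.algebraMap_eq_smul_one]

lemma exp_complex_smul_one (z : ℂ) :
    exp (z • (1 : Matrix (Fin d) (Fin d) ℂ)) = Complex.exp z • (1 : Matrix (Fin d) (Fin d) ℂ) := by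
  have h1 : z • (1 : Matrix (Fin d) (Fin d) ℂ) = algebraMap ℂ _ z :=
    (Algebra.algebraMap_eq_smul_one z).symm
  rw [h1]
  have h2 := map_exp (algebraMap ℂ (Matrix (Fin d) (Fin d) ℂ)) (continuous_algebraMap _ _) z
  rw [← Complex.exp_eq_exp_ℂ] at h2
  convert h2.symm using 1
  · rfl
  · rw [Algebra.algebraMap_eq_smul_one]

lemma exp_map_ofReal (M : Matrix (Fin d) (Fin d) ℝ) :
    (exp M).map (Complex.ofReal) = exp (M.map Complex.ofReal) := by
  have hf : Continuous fun N : Matrix (Fin d) (Fin d) ℝ => N.map (Complex.ofReal) :=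
    Continuous.matrix_map continuous_id Complex.continuous_ofReal
  exact map_exp (Complex.ofRealHom.mapMatrix :
    Matrix (Fin d) (Fin d) ℝ →+* Matrix (Fin d) (Fin d) ℂ) hf M

lemma smul_map_ofReal (t : ℝ) (M : Matrix (Fin d) (Fin d) ℝ) :
    (t • M).map Complex.ofReal = t • (M.map Complex.ofReal) := by
  ext i j; simp

lemma subMarkov_mulVec_norm {P : Matrix (Fin d) (Fin d) ℝ} (h0 : ∀ i j, 0 ≤ P i j) {s : ℝ}
    (hs : ∀ i, ∑ j, P i j ≤ s) (v : Fin d → ℂ) :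
    ‖P.map Complex.ofReal *ᵥ v‖ ≤ s * ‖v‖ := by
  have hsn : 0 ≤ s * ‖v‖ := by
    rcases isEmpty_or_nonempty (Fin d) with he | hne
    · have : ‖v‖ = 0 := by simp [norm_eq_zero]; exact Subsingleton.elim v 0
      simp [this]
    · obtain ⟨i⟩ := hne
      have h1 : (0:ℝ) ≤ ∑ j, P i j := Finset.sum_nonneg fun j _ => h0 i j
      exact mul_nonneg (le_trans h1 (hs i)) (norm_nonneg v)
  rw [pi_norm_le_iff_of_nonneg hsn]
  intro i
  have h1 : ‖(P.map Complex.ofReal *ᵥ v) i‖ ≤ ∑ j, P i j * ‖v j‖ := by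
    simp only [Matrix.mulVec, dotProduct, Matrix.map_apply]
    refine le_trans (norm_sum_le _ _) ?_
    refine Finset.sum_le_sum fun j _ => ?_
    rw [norm_mul, Complex.norm_real, Real.norm_eq_abs, abs_of_nonneg (h0 i j)]
  refine h1.trans ?_
  calc ∑ j, P i j * ‖v j‖ ≤ ∑ j, P i j * ‖v‖ :=
        Finset.sum_le_sum fun j _ => mul_le_mul_of_nonneg_left (norm_le_pi_norm v j) (h0 i j)
    _ = (∑ j, P i j) * ‖v‖ := by rw [Finset.sum_mul]
    _ ≤ s * ‖v‖ := mul_le_mul_of_nonneg_right (hs i) (norm_nonneg v)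
/-- the uniform rate bound -/
def rateB (Q : Matrix (Fin d) (Fin d) ℝ) : ℝ := ∑ i, |Q i i|

lemma rateB_nonneg (Q : Matrix (Fin d) (Fin d) ℝ) : 0 ≤ rateB Q :=
  Finset.sum_nonneg fun i _ => abs_nonneg _

lemma diag_add_rateB_nonneg (Q : Matrix (Fin d) (Fin d) ℝ) (i : Fin d) : 0 ≤ Q i i + rateB Q := by
  have h1 : |Q i i| ≤ rateB Q :=
    Finset.single_le_sum (fun k _ => abs_nonneg (Q k k)) (Finset.mem_univ i)
  have := neg_abs_le (Q i i)
  linarith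

variable {Q : Matrix (Fin d) (Fin d) ℝ}

lemma shifted_nonneg (hQ : IsGenerator Q) {t : ℝ} (ht : 0 ≤ t) (i j : Fin d) :
    0 ≤ (t • Q + (t * rateB Q) • (1 : Matrix (Fin d) (Fin d) ℝ)) i j := by
  rcases eq_or_ne i j with rfl | hij
  · have h := diag_add_rateB_nonneg Q i
    have : (t • Q + (t * rateB Q) • (1 : Matrix (Fin d) (Fin d) ℝ)) i i
        = t * (Q i i + rateB Q) := by
      simp [Matrix.add_apply, Matrix.smul_apply, Matrix.one_apply, mul_add]
    rw [this]; exact mul_nonneg ht h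
  · have : (t • Q + (t * rateB Q) • (1 : Matrix (Fin d) (Fin d) ℝ)) i j = t * Q i j := by
      simp [Matrix.add_apply, Matrix.smul_apply, Matrix.one_apply, hij]
    rw [this]; exact mul_nonneg ht (hQ.1 i j hij)

lemma exp_smul_decomp (hQ : IsGenerator Q) (t : ℝ) :
    exp (t • Q) = Real.exp (-(t * rateB Q)) •
      exp (t • Q + (t * rateB Q) • (1 : Matrix (Fin d) (Fin d) ℝ)) := by
  have hsplit : t • Q = (t • Q + (t * rateB Q) • (1 : Matrix (Fin d) (Fin d) ℝ))
      + (-(t * rateB Q)) • (1 : Matrix (Fin d) (Fin d) ℝ) := by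
    rw [neg_smul]; abel
  have hcomm : Commute (t • Q + (t * rateB Q) • (1 : Matrix (Fin d) (Fin d) ℝ))
      ((-(t * rateB Q)) • (1 : Matrix (Fin d) (Fin d) ℝ)) :=
    (Commute.one_right _).smul_right _
  conv_lhs => rw [hsplit]
  rw [Matrix.exp_add_of_commute _ _ hcomm, exp_real_smul_one, mul_smul_comm, mul_one]

lemma exp_nonneg (hQ : IsGenerator Q) {t : ℝ} (ht : 0 ≤ t) (i j : Fin d) :
    0 ≤ exp (t • Q) i j := by
  rw [exp_smul_decomp hQ t]
  have := exp_nonneg_entries (shifted_nonneg hQ ht) i j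
  have h2 : (0:ℝ) ≤ Real.exp (-(t * rateB Q)) := (Real.exp_pos _).le
  simpa [Matrix.smul_apply] using mul_nonneg h2 this

lemma exp_diag_lb (hQ : IsGenerator Q) {t : ℝ} (ht : 0 ≤ t) (i : Fin d) :
    Real.exp (-(t * rateB Q)) ≤ exp (t • Q) i i := by
  rw [exp_smul_decomp hQ t]
  have h1 := exp_diag_ge_one (shifted_nonneg hQ ht) i
  have h2 : (0:ℝ) < Real.exp (-(t * rateB Q)) := Real.exp_pos _
  have : Real.exp (-(t * rateB Q)) * 1 ≤ Real.exp (-(t * rateB Q)) *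
      exp (t • Q + (t * rateB Q) • (1 : Matrix (Fin d) (Fin d) ℝ)) i i :=
    mul_le_mul_of_nonneg_left h1 h2.le
  simpa [Matrix.smul_apply] using this

lemma gen_mulVec_one (hQ : IsGenerator Q) : Q *ᵥ (fun _ => (1:ℝ)) = 0 := by
  ext i
  simpa [Matrix.mulVec, dotProduct] using hQ.2 i

lemma exp_rowsum (hQ : IsGenerator Q) (t : ℝ) (i : Fin d) :
    ∑ j, exp (t • Q) i j = 1 := by
  have h1 : exp (t • Q) *ᵥ (fun _ => (1:ℝ)) = fun _ => (1:ℝ) := by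
    rw [exp_mulVec]
    have hz : ∀ n : ℕ, n ≠ 0 → ((n.factorial : ℝ)⁻¹) • ((t • Q) ^ n *ᵥ fun _ => (1:ℝ)) = 0 := by
      intro n hn
      obtain ⟨m, rfl⟩ := Nat.exists_eq_succ_of_ne_zero hn
      have : (t • Q) ^ (m + 1) *ᵥ (fun _ => (1:ℝ)) = 0 := by
        rw [pow_succ, ← Matrix.mulVec_mulVec]
        have : (t • Q) *ᵥ (fun _ => (1:ℝ)) = 0 := by
          rw [Matrix.smul_mulVec, gen_mulVec_one hQ, smul_zero]
        rw [this, Matrix.mulVec_zero]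
      rw [this, smul_zero]
    rw [tsum_eq_single 0 hz]
    ext i; simp
  have := congrFun h1 i
  simpa [Matrix.mulVec, dotProduct] using this

lemma exp_markov (hQ : IsGenerator Q) {t : ℝ} (ht : 0 ≤ t) : IsMarkov (exp (t • Q)) :=
  ⟨exp_nonneg hQ ht, exp_rowsum hQ t⟩
variable {Q : Matrix (Fin d) (Fin d) ℝ}

lemma exp_smul_map (Q : Matrix (Fin d) (Fin d) ℝ) (t : ℝ) :
    exp (t • Q.map Complex.ofReal) = (exp (t • Q)).map Complex.ofReal := by
  rw [exp_map_ofReal]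
  congr 1
  ext i j; simp

/-- powers act on eigenvectors -/
lemma pow_mulVec_eig {A : Matrix (Fin d) (Fin d) ℂ} {μ : ℂ} {v : Fin d → ℂ}
    (hv : A *ᵥ v = μ • v) (n : ℕ) : (A ^ n) *ᵥ v = (μ ^ n) • v := by
  induction n with
  | zero => simp
  | succ n ih =>
    rw [pow_succ, ← Matrix.mulVec_mulVec, hv, Matrix.mulVec_smul, ih, smul_smul, pow_succ,
      mul_comm]

/-- the exponential acts on eigenvectors -/
lemma exp_mulVec_eig {A : Matrix (Fin d) (Fin d) ℂ} {μ : ℂ} {v : Fin d → ℂ}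
    (hv : A *ᵥ v = μ • v) (t : ℝ) :
    exp (t • A) *ᵥ v = Complex.exp ((t : ℂ) * μ) • v := by
  have hA : (t • A) *ᵥ v = ((t : ℂ) * μ) • v := by
    rw [Matrix.smul_mulVec, hv]
    ext i
    simp [Complex.real_smul]
    ring
  rw [exp_mulVec]
  have hterm : ∀ n : ℕ, ((n.factorial : ℝ)⁻¹) • ((t • A) ^ n *ᵥ v)
      = ((n.factorial : ℂ)⁻¹ * ((t:ℂ)*μ) ^ n) • v := by
    intro n
    rw [pow_mulVec_eig hA n]
    ext i
    simp [Complex.real_smul]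
    ring
  rw [tsum_congr hterm]
  have hsum : Summable fun n : ℕ => ((n.factorial : ℂ)⁻¹ * ((t:ℂ)*μ) ^ n) := by
    simpa [smul_eq_mul] using expSeries_summable' (𝕂 := ℂ) ((t:ℂ)*μ)
  rw [hsum.tsum_smul_const v, Complex.exp_eq_exp_ℂ, exp_eq_tsum ℂ]
  simp [smul_eq_mul]

lemma markov_contract (hQ : IsGenerator Q) {t : ℝ} (ht : 0 ≤ t) (v : Fin d → ℂ) :
    ‖exp (t • Q.map Complex.ofReal) *ᵥ v‖ ≤ ‖v‖ := by
  rw [exp_smul_map]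
  have := subMarkov_mulVec_norm (P := exp (t • Q)) (exp_nonneg hQ ht) (s := 1)
    (fun i => (exp_rowsum hQ t i).le) v
  simpa using this

/-- Eigenvalue classification -/
lemma eig_class (hQ : IsGenerator Q) {μ : ℂ} {v : Fin d → ℂ} (hv0 : v ≠ 0)
    (hv : Q.map Complex.ofReal *ᵥ v = μ • v) : μ.re < 0 ∨ μ = 0 := by
  have hvn : 0 < ‖v‖ := norm_pos_iff.mpr hv0
  have hb : ∀ t : ℝ, 0 ≤ t → Real.exp (t * μ.re) ≤ 1 := by
    intro t ht
    have h1 := markov_contract hQ ht v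
    rw [exp_mulVec_eig hv] at h1
    rw [norm_smul] at h1
    have : ‖Complex.exp ((t:ℂ) * μ)‖ ≤ 1 := by
      by_contra hc
      push_neg at hc
      nlinarith
    rwa [Complex.norm_exp, Complex.mul_re, Complex.ofReal_re,
      Complex.ofReal_im, zero_mul, sub_zero] at this
  have hre : μ.re ≤ 0 := by
    have := hb 1 zero_le_one
    rw [one_mul] at this
    by_contra hc
    push_neg at hc
    have := Real.exp_lt_exp.mpr (show (0:ℝ) < μ.re from hc)
    rw [Real.exp_zero] at this
    linarith
  rcases lt_or_eq_of_le hre with h | h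
  · exact Or.inl h
  -- now μ.re = 0; show μ = 0
  right
  have hexp1 : ∀ t : ℝ, 0 < t → Complex.exp ((t:ℂ) * μ) = 1 := by
    intro t ht
    set δ := Real.exp (-(t * rateB Q)) with hδ
    have hδpos : 0 < δ := Real.exp_pos _
    set S : Matrix (Fin d) (Fin d) ℝ := exp (t • Q) - δ • 1 with hS
    have hS0 : ∀ i j, 0 ≤ S i j := by
      intro i j
      rcases eq_or_ne i j with rfl | hij
      · have := exp_diag_lb hQ ht.le i
        simp [hS, Matrix.sub_apply, Matrix.smul_apply, Matrix.one_apply]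
        linarith
      · have := exp_nonneg hQ ht.le i j
        simp [hS, Matrix.sub_apply, Matrix.smul_apply, Matrix.one_apply, hij]
        linarith
    have hSsum : ∀ i, ∑ j, S i j ≤ 1 - δ := by
      intro i
      have : ∑ j, S i j = (∑ j, exp (t • Q) i j) - δ := by
        simp [hS, Matrix.sub_apply, Matrix.smul_apply, Matrix.one_apply, Finset.sum_sub_distrib]
      rw [this, exp_rowsum hQ t i]
    have hsv : S.map Complex.ofReal *ᵥ v = (Complex.exp ((t:ℂ) * μ) - δ) • v := by
      have hmap : S.map Complex.ofReal
          = (exp (t • Q)).map Complex.ofReal - (δ:ℂ) • 1 := by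
        ext i j
        by_cases hij : i = j
        · subst hij
          simp [hS, Matrix.sub_apply, Matrix.smul_apply, Matrix.one_apply]
        · simp [hS, Matrix.sub_apply, Matrix.smul_apply, Matrix.one_apply, hij]
      rw [hmap, Matrix.sub_mulVec, ← exp_smul_map, exp_mulVec_eig hv]
      have : ((δ:ℂ) • (1 : Matrix (Fin d) (Fin d) ℂ)) *ᵥ v = (δ:ℂ) • v := by
        rw [Matrix.smul_mulVec, Matrix.one_mulVec]
      rw [this, sub_smul]
    have hbound := subMarkov_mulVec_norm hS0 hSsum v
    rw [hsv, norm_smul] at hbound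
    have habs : ‖Complex.exp ((t:ℂ) * μ) - (δ:ℂ)‖ ≤ 1 - δ := by
      by_contra hc
      push_neg at hc
      nlinarith
    set μt := Complex.exp ((t:ℂ) * μ) with hμt
    have habs1 : ‖μt‖ = 1 := by
      have hre0 : ((t:ℂ) * μ).re = 0 := by
        simp [Complex.mul_re, h]
      rw [hμt, Complex.norm_exp, hre0, Real.exp_zero]
    -- re μt ≥ 1
    have hnormSq : Complex.normSq (μt - (δ:ℂ)) ≤ (1 - δ)^2 := by
      have h1 : ‖μt - (δ:ℂ)‖ ≤ 1 - δ := habs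
      have h2 := Complex.sq_norm (μt - (δ:ℂ))
      nlinarith [norm_nonneg (μt - (δ:ℂ))]
    have hsq : μt.re^2 + μt.im^2 = 1 := by
      have h2 := Complex.sq_norm μt
      rw [habs1] at h2
      simp [Complex.normSq_apply] at h2
      nlinarith
    have hre1 : 1 ≤ μt.re := by
      have : Complex.normSq (μt - (δ:ℂ)) = μt.re^2 - 2*δ*μt.re + δ^2 + μt.im^2 := by
        simp [Complex.normSq_apply, Complex.sub_re, Complex.sub_im]
        ring
      rw [this] at hnormSq
      nlinarith
    have him : μt.im = 0 := by nlinarith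
    have : μt = 1 := by
      apply Complex.ext
      · simp only [Complex.one_re]; nlinarith
      · simp only [Complex.one_im]; exact him
    exact this
  -- use t = 1 and t = π
  have h1 := hexp1 1 one_pos
  have hπ := hexp1 Real.pi Real.pi_pos
  rw [Complex.exp_eq_one_iff] at h1 hπ
  obtain ⟨n, hn⟩ := h1
  obtain ⟨m, hm⟩ := hπ
  rw [Complex.ofReal_one, one_mul] at hn
  by_contra hμ0
  have hn0 : n ≠ 0 := by
    rintro rfl
    simp at hn
    exact hμ0 hn
  -- π * μ = m * 2π i and μ = n 2π i ⇒ π n = m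
  rw [hn] at hm
  have hI : (Real.pi : ℂ) * (n * (2 * Real.pi * Complex.I)) = m * (2 * Real.pi * Complex.I) := hm
  have h2πI : (2 * (Real.pi:ℂ) * Complex.I) ≠ 0 := by
    simp [Complex.I_ne_zero, Real.pi_ne_zero, Complex.ofReal_ne_zero]
  have hπn : (Real.pi : ℂ) * n = m := by
    have hz : ((Real.pi:ℂ) * n - m) * (2 * (Real.pi:ℂ) * Complex.I) = 0 := by
      linear_combination hI
    rcases mul_eq_zero.mp hz with h' | h'
    · exact sub_eq_zero.mp h'
    · exact absurd h' h2πI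
  have : Real.pi * (n:ℝ) = (m:ℝ) := by exact_mod_cast congrArg Complex.re hπn
  have : Real.pi = (m:ℝ) / (n:ℝ) := by
    field_simp [hn0] at this ⊢
    linarith [this]
  exact (irrational_pi.ne_rat ((m:ℚ)/(n:ℚ))) (by push_cast [this]; ring)

variable {A : Matrix (Fin d) (Fin d) ℂ}
variable {A : Matrix (Fin d) (Fin d) ℂ}

lemma ker_sq (hbound : ∀ t : ℝ, 0 ≤ t → ∀ v : Fin d → ℂ, ‖exp (t • A) *ᵥ v‖ ≤ ‖v‖)
    {v : Fin d → ℂ} (h : A *ᵥ (A *ᵥ v) = 0) : A *ᵥ v = 0 := by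
  have hexp : ∀ t : ℝ, exp (t • A) *ᵥ v = v + t • (A *ᵥ v) := by
    intro t
    rw [exp_mulVec]
    have hz : ∀ n ∉ ({0, 1} : Finset ℕ), ((n.factorial : ℝ)⁻¹) • ((t • A) ^ n *ᵥ v) = 0 := by
      intro n hn
      simp only [Finset.mem_insert, Finset.mem_singleton] at hn
      push_neg at hn
      obtain ⟨m, rfl⟩ : ∃ m, n = m + 2 := by
        refine ⟨n - 2, ?_⟩
        omega
      have e : (t • A) *ᵥ ((t • A) *ᵥ v) = 0 := by
        rw [Matrix.smul_mulVec, Matrix.smul_mulVec, Matrix.mulVec_smul, h]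
        simp
      have : (t • A) ^ (m + 2) *ᵥ v = 0 := by
        rw [show m + 2 = m + 1 + 1 from rfl, pow_succ, pow_succ, ← Matrix.mulVec_mulVec,
          ← Matrix.mulVec_mulVec, e, Matrix.mulVec_zero]
      rw [this, smul_zero]
    rw [tsum_eq_sum hz]
    rw [Finset.sum_insert (by simp), Finset.sum_singleton]
    simp [Matrix.smul_mulVec]
  by_contra hne
  have hw : 0 < ‖A *ᵥ v‖ := norm_pos_iff.mpr hne
  set T : ℝ := (2 * ‖v‖ + 1) / ‖A *ᵥ v‖ with hT
  have hT0 : 0 ≤ T := by positivity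
  have h1 := hbound T hT0 v
  rw [hexp T] at h1
  have h2 : ‖T • (A *ᵥ v)‖ - ‖v‖ ≤ ‖v + T • (A *ᵥ v)‖ := by
    have := norm_add_le (-(v)) (v + T • (A *ᵥ v))
    simp at this
    linarith [norm_sub_norm_le (v + T • (A *ᵥ v)) v]
  rw [norm_smul, Real.norm_eq_abs, abs_of_nonneg hT0] at h2
  rw [hT, div_mul_cancel₀ _ hw.ne'] at h2
  linarith

lemma ker_pow (hbound : ∀ t : ℝ, 0 ≤ t → ∀ v : Fin d → ℂ, ‖exp (t • A) *ᵥ v‖ ≤ ‖v‖)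
    (n : ℕ) : ∀ v : Fin d → ℂ, (A ^ n) *ᵥ v = 0 → A *ᵥ v = 0 := by
  induction n with
  | zero => intro v h; simp [Matrix.one_mulVec] at h; simp [h]
  | succ n ih =>
    intro v h
    have h1 : (A ^ n) *ᵥ (A *ᵥ v) = 0 := by
      rw [Matrix.mulVec_mulVec, ← pow_succ, h]
    exact ker_sq hbound (ih _ h1)

lemma exp_fixed {v : Fin d → ℂ} (h : A *ᵥ v = 0) (t : ℝ) : exp (t • A) *ᵥ v = v := by
  rw [exp_mulVec]
  have hz : ∀ n : ℕ, n ≠ 0 → ((n.factorial : ℝ)⁻¹) • ((t • A) ^ n *ᵥ v) = 0 := by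
    intro n hn
    obtain ⟨m, rfl⟩ := Nat.exists_eq_succ_of_ne_zero hn
    have : (t • A) ^ (m + 1) *ᵥ v = 0 := by
      rw [pow_succ, ← Matrix.mulVec_mulVec, Matrix.smul_mulVec, h, smul_zero,
        Matrix.mulVec_zero]
    rw [this, smul_zero]
  rw [tsum_eq_single 0 hz]
  simp [Matrix.one_mulVec]

lemma exp_tendsto_zero_of_neg {lam : ℂ} (hlam : lam.re < 0) (k : ℕ) {v : Fin d → ℂ}
    (h : ((A - lam • 1) ^ k) *ᵥ v = 0) :
    Tendsto (fun t : ℝ => exp (t • A) *ᵥ v) atTop (𝓝 0) := by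
  set N : Matrix (Fin d) (Fin d) ℂ := A - lam • 1 with hN
  have hNpow : ∀ n : ℕ, k ≤ n → (N ^ n) *ᵥ v = 0 := by
    intro n hk
    obtain ⟨m, rfl⟩ := Nat.exists_eq_add_of_le hk
    rw [add_comm, pow_add, ← Matrix.mulVec_mulVec, h, Matrix.mulVec_zero]
  have key : ∀ t : ℝ, exp (t • A) *ᵥ v
      = ∑ n ∈ Finset.range k, (Complex.exp ((t:ℂ) * lam) * ((n.factorial : ℝ)⁻¹ * t ^ n : ℝ))
          • ((N ^ n) *ᵥ v) := by
    intro t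
    have hsplit : t • A = t • N + ((t:ℂ) * lam) • (1 : Matrix (Fin d) (Fin d) ℂ) := by
      rw [hN]
      ext i j
      by_cases hij : i = j
      · subst hij; simp [Matrix.one_apply, Complex.real_smul]; ring
      · simp [Matrix.one_apply, hij]
    have hcomm : Commute (t • N) (((t:ℂ) * lam) • (1 : Matrix (Fin d) (Fin d) ℂ)) :=
      (Commute.one_right _).smul_right _
    rw [hsplit, Matrix.exp_add_of_commute _ _ hcomm, exp_complex_smul_one, mul_smul_comm,
      mul_one]
    have hexpN : exp (t • N) *ᵥ v
        = ∑ n ∈ Finset.range k, ((n.factorial : ℝ)⁻¹ * t ^ n : ℝ) • ((N ^ n) *ᵥ v) := by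
      rw [exp_mulVec]
      have hz : ∀ n ∉ Finset.range k, ((n.factorial : ℝ)⁻¹) • ((t • N) ^ n *ᵥ v) = 0 := by
        intro n hn
        rw [Finset.mem_range, not_lt] at hn
        rw [smul_pow, Matrix.smul_mulVec, hNpow n hn, smul_zero, smul_zero]
      rw [tsum_eq_sum hz]
      refine Finset.sum_congr rfl fun n _ => ?_
      rw [smul_pow, Matrix.smul_mulVec, smul_smul, mul_comm]
    rw [Matrix.smul_mulVec, hexpN, Finset.smul_sum]
    refine Finset.sum_congr rfl fun n _ => ?_
    ext i
    simp [Complex.real_smul]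
    ring
  have hterm : ∀ n : ℕ, Tendsto (fun t : ℝ =>
      (Complex.exp ((t:ℂ) * lam) * ((n.factorial : ℝ)⁻¹ * t ^ n : ℝ)) • ((N ^ n) *ᵥ v))
      atTop (𝓝 (0 : Fin d → ℂ)) := by
    intro n
    have hcoef : Tendsto (fun t : ℝ => t ^ n * Real.exp (t * lam.re)) atTop (𝓝 0) := by
      have hc : 0 < -lam.re := by linarith
      have h1 := Real.tendsto_pow_mul_exp_neg_atTop_nhds_zero n
      have h2 : Tendsto (fun t : ℝ => (-lam.re) * t) atTop atTop :=
        tendsto_id.const_mul_atTop hc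
      have h4 : Tendsto (fun t : ℝ => ((-lam.re) * t) ^ n * Real.exp (-((-lam.re) * t)))
          atTop (𝓝 0) := h1.comp h2
      have h5 := h4.const_mul ((-lam.re) ^ n)⁻¹
      rw [mul_zero] at h5
      refine h5.congr' ?_
      filter_upwards [eventually_gt_atTop 0] with t ht
      have hne : (-lam.re) ^ n ≠ 0 := by positivity
      field_simp [mul_pow]
      ring_nf
    refine squeeze_zero_norm' ?_ (by simpa using hcoef.const_mul ‖(N ^ n) *ᵥ v‖)
    filter_upwards [eventually_ge_atTop (0:ℝ)] with t ht
    rw [norm_smul]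
    have habs : ‖Complex.exp ((t:ℂ) * lam) * ((n.factorial : ℝ)⁻¹ * t ^ n : ℝ)‖
        = Real.exp (t * lam.re) * ((n.factorial : ℝ)⁻¹ * t ^ n) := by
      rw [norm_mul, Complex.norm_exp, Complex.norm_real, Real.norm_eq_abs]
      congr 1
      · congr 1
        simp [Complex.mul_re]
      · rw [abs_of_nonneg (by positivity)]
    rw [habs]
    calc Real.exp (t * lam.re) * ((n.factorial : ℝ)⁻¹ * t ^ n) * ‖(N ^ n) *ᵥ v‖
        ≤ Real.exp (t * lam.re) * (1 * t ^ n) * ‖(N ^ n) *ᵥ v‖ := by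
          have h1 : ((n.factorial : ℝ)⁻¹) ≤ 1 := by
            rw [inv_le_one_iff₀]
            right
            exact_mod_cast Nat.one_le_iff_ne_zero.mpr (Nat.factorial_ne_zero n)
          gcongr
      _ = ‖(N ^ n) *ᵥ v‖ * (t ^ n * Real.exp (t * lam.re)) := by ring
  have hsum : Tendsto (fun t : ℝ => ∑ n ∈ Finset.range k,
      (Complex.exp ((t:ℂ) * lam) * ((n.factorial : ℝ)⁻¹ * t ^ n : ℝ)) • ((N ^ n) *ᵥ v))
      atTop (𝓝 (∑ _n ∈ Finset.range k, (0 : Fin d → ℂ))) :=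
    tendsto_finset_sum _ fun n _ => hterm n
  rw [Finset.sum_const_zero] at hsum
  exact hsum.congr fun t => (key t).symm

lemma exp_two_smul (Q : Matrix (Fin d) (Fin d) ℝ) (t : ℝ) :
    exp ((2 * t) • Q) = exp (t • Q) * exp (t • Q) := by
  have h : (2 * t) • Q = t • Q + t • Q := by rw [← add_smul]; ring_nf
  rw [h, Matrix.exp_add_of_commute _ _ (Commute.refl _)]

lemma conv_all {A : Matrix (Fin d) (Fin d) ℂ}
    (hbound : ∀ t : ℝ, 0 ≤ t → ∀ v : Fin d → ℂ, ‖exp (t • A) *ᵥ v‖ ≤ ‖v‖)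
    (heig : ∀ (μ : ℂ) (v : Fin d → ℂ), v ≠ 0 → A *ᵥ v = μ • v → μ.re < 0 ∨ μ = 0)
    (v : Fin d → ℂ) :
    ∃ L, Tendsto (fun t : ℝ => exp (t • A) *ᵥ v) atTop (𝓝 L) := by
  set f : Module.End ℂ (Fin d → ℂ) := Matrix.toLinAlgEquiv' A with hf
  have htop := Module.End.iSup_maxGenEigenspace_eq_top f
  have hv : v ∈ ⨆ μ : ℂ, f.maxGenEigenspace μ := htop ▸ Submodule.mem_top
  refine Submodule.iSup_induction _ (motive := fun v => ∃ L,
      Tendsto (fun t : ℝ => exp (t • A) *ᵥ v) atTop (𝓝 L)) hv ?_ ?_ ?_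
  · -- elements of a generalized eigenspace
    intro μ w hw
    rcases eq_or_ne w 0 with rfl | hw0
    · exact ⟨0, by simpa [Matrix.mulVec_zero] using tendsto_const_nhds⟩
    obtain ⟨k, hk⟩ := (Module.End.mem_maxGenEigenspace f μ w).mp hw
    have hmk : ((A - μ • 1) ^ k) *ᵥ w = 0 := by
      have h1 : Matrix.toLinAlgEquiv' ((A - μ • 1) ^ k) = (f - μ • 1) ^ k := by
        rw [map_pow, map_sub, map_smul, map_one, hf]
      have h2 := congrArg (fun g : Module.End ℂ (Fin d → ℂ) => g w) h1
      rw [← Matrix.toLinAlgEquiv'_apply]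
      exact h2.trans hk
    -- μ is an eigenvalue since w ≠ 0
    have hgev : f.HasGenEigenvalue μ k := by
      rw [Module.End.hasGenEigenvalue_iff]
      refine Submodule.ne_bot_iff _ |>.mpr ⟨w, ?_, hw0⟩
      rw [Module.End.mem_genEigenspace_nat]
      exact LinearMap.mem_ker.mpr hk
    have hev : f.HasEigenvalue μ := Module.End.hasEigenvalue_of_hasGenEigenvalue hgev
    obtain ⟨u, hu⟩ := hev.exists_hasEigenvector
    have hu' : A *ᵥ u = μ • u := by
      rw [← Matrix.toLinAlgEquiv'_apply, ← hf]
      exact hu.apply_eq_smul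
    rcases heig μ u hu.right hu' with hneg | h0
    · exact ⟨0, exp_tendsto_zero_of_neg hneg k hmk⟩
    · subst h0
      have hk0 : (A ^ k) *ᵥ w = 0 := by simpa using hmk
      have hAw : A *ᵥ w = 0 := ker_pow hbound k w hk0
      exact ⟨w, by simpa [exp_fixed hAw] using tendsto_const_nhds⟩
  · exact ⟨0, by simpa [Matrix.mulVec_zero] using tendsto_const_nhds⟩
  · rintro x y ⟨Lx, hLx⟩ ⟨Ly, hLy⟩
    exact ⟨Lx + Ly, by simpa [Matrix.mulVec_add] using hLx.add hLy⟩

end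
end MarkovLimitAux

open MarkovLimitAux NormedSpace Filter Topology
open scoped Matrix

theorem markov_semigroup_limit (d : ℕ) (Q : Matrix (Fin d) (Fin d) ℝ)
    (hQ : IsGenerator Q) :
    ∃ Minf : Matrix (Fin d) (Fin d) ℝ,
      Filter.Tendsto (fun t : ℝ => NormedSpace.exp (t • Q))
        Filter.atTop (nhds Minf) ∧
      IsMarkov Minf ∧ Minf * Minf = Minf := by
  classical
  set A : Matrix (Fin d) (Fin d) ℂ := Q.map Complex.ofReal with hA
  have hbound : ∀ t : ℝ, 0 ≤ t → ∀ v : Fin d → ℂ, ‖exp (t • A) *ᵥ v‖ ≤ ‖v‖ :=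
    fun t ht v => markov_contract hQ ht v
  have heig : ∀ (μ : ℂ) (v : Fin d → ℂ), v ≠ 0 → A *ᵥ v = μ • v → μ.re < 0 ∨ μ = 0 :=
    fun μ v hv0 hv => eig_class hQ hv0 hv
  have hcol : ∀ j : Fin d, ∃ L, Tendsto (fun t : ℝ => exp (t • A) *ᵥ Pi.single j 1)
      atTop (𝓝 L) := fun j => conv_all hbound heig (Pi.single j 1)
  choose L hL using hcol
  set Minf : Matrix (Fin d) (Fin d) ℝ := Matrix.of fun i j => (L j i).re with hMinf
  have hentry : ∀ i j, Tendsto (fun t : ℝ => exp (t • Q) i j) atTop (𝓝 (Minf i j)) := by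
    intro i j
    have h1 : ∀ t : ℝ, ((exp (t • Q) i j : ℝ) : ℂ) = (exp (t • A) *ᵥ Pi.single j 1) i := by
      intro t
      rw [hA, exp_smul_map]
      simp [Matrix.mulVec_single]
    have h2 : Tendsto (fun t : ℝ => (exp (t • A) *ᵥ Pi.single j 1) i) atTop (𝓝 (L j i)) :=
      tendsto_pi_nhds.mp (hL j) i
    have h3 : Tendsto (fun t : ℝ => ((exp (t • Q) i j : ℝ) : ℂ)) atTop (𝓝 (L j i)) :=
      h2.congr fun t => (h1 t).symm
    have h4 := (Complex.continuous_re.tendsto (L j i)).comp h3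
    simpa [hMinf, Function.comp_def, Matrix.of_apply] using h4
  have hmat : Tendsto (fun t : ℝ => exp (t • Q)) atTop (𝓝 Minf) := by
    refine tendsto_pi_nhds.mpr ?_
    intro i
    rw [tendsto_pi_nhds]
    intro j
    exact hentry i j
  refine ⟨Minf, hmat, ⟨?_, ?_⟩, ?_⟩
  · intro i j
    refine ge_of_tendsto (hentry i j) ?_
    filter_upwards [eventually_ge_atTop (0:ℝ)] with t ht
    exact exp_nonneg hQ ht i j
  · intro i
    have h1 : Tendsto (fun t : ℝ => ∑ j, exp (t • Q) i j) atTop (𝓝 (∑ j, Minf i j)) :=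
      tendsto_finset_sum _ fun j _ => hentry i j
    have h2 : (fun t : ℝ => ∑ j, exp (t • Q) i j) = fun _ => (1:ℝ) :=
      funext fun t => exp_rowsum hQ t i
    rw [h2] at h1
    exact tendsto_nhds_unique h1 tendsto_const_nhds
  · have h2t : Tendsto (fun t : ℝ => 2 * t) atTop atTop :=
      tendsto_id.const_mul_atTop two_pos
    have h1 : Tendsto (fun t : ℝ => exp ((2 * t) • Q)) atTop (𝓝 Minf) := hmat.comp h2t
    have h3 : Tendsto (fun t : ℝ => exp (t • Q) * exp (t • Q)) atTop (𝓝 (Minf * Minf)) :=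
      hmat.mul hmat
    have h4 := h1.congr fun t => exp_two_smul Q t
    exact (tendsto_nhds_unique h3 h4)
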